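/- Let η ∈ ℕ^N and I = {t_1 < ... < t_s} ⊆ {1,...,N} be nonempty, with ν = c_I(η) defined by ν_{t_j} = η_{t_{j+1}} (j = 1,...,s−1), ν_{t_s} = η_{t_1} + 1, ν_i = η_i for i ∉ I. Then I is maximal with respect to η, i.e. η_j ≠ η_{t_u} for all j with t_{u−1} < j < t_u (for u = 1,...,s, with t_0 := 0) and η_j ≠ η_{t_1} + 1 for all j with t_s < j ≤ N, if and only if ν_j ≠ ν_{t_s} − 1 for 1 ≤ j < t_1 and ν_j ≠ ν_{t_u} for t_u < j < t_{u+1} (u = 1,...,s, with t_{s+1} := N+1). -/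
import Mathlib


/-- The composition `c_I(η)`. -/
def cI {N : ℕ} (η : Fin N → ℕ) (I : Finset (Fin N)) : Fin N → ℕ := fun i =>
  if hi : i ∈ I then
    if h : (I.filter fun j => i < j).Nonempty
    then η ((I.filter fun j => i < j).min' h)
    else η (I.min' ⟨i, hi⟩) + 1
  else η i

/-- `I = {t_1 < … < t_s}` is maximal with respect to `η`:
`η_j ≠ η_{t_u}` for `t_{u-1} < j < t_u` and `η_j ≠ η_{t_1} + 1` for `j > t_s`. -/
def MaximalWrt {N : ℕ} (η : Fin N → ℕ) (I : Finset (Fin N)) : Prop :=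
  I.Nonempty ∧ ∀ j : Fin N, j ∉ I →
    if h : (I.filter fun t => j < t).Nonempty
    then η j ≠ η ((I.filter fun t => j < t).min' h)
    else ∀ hI : I.Nonempty, η j ≠ η (I.min' hI) + 1

private lemma min'_congr {α : Type*} [LinearOrder α] {s t : Finset α} (h : s = t)
    (hs : s.Nonempty) : s.min' hs = t.min' (h ▸ hs) := by subst h; rfl

theorem stmt_6 (N : ℕ) (η : Fin N → ℕ) (I : Finset (Fin N)) (hI : I.Nonempty) :
    MaximalWrt η I ↔
      ∀ j : Fin N, j ∉ I →
        if h : (I.filter fun t => t < j).Nonempty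
        then cI η I j ≠ cI η I ((I.filter fun t => t < j).max' h)
        else cI η I j ≠ cI η I (I.max' hI) - 1 := by
  unfold MaximalWrt
  rw [and_iff_right hI]
  refine forall_congr' fun j => ?_
  refine imp_congr_right fun hj => ?_
  have hcj : cI η I j = η j := by simp [cI, hj]
  by_cases h1 : (I.filter fun t => t < j).Nonempty
  · rw [dif_pos h1, hcj]
    have hmmem := (I.filter fun t => t < j).max'_mem h1
    set m := (I.filter fun t => t < j).max' h1 with hm
    have hmI : m ∈ I := (Finset.mem_filter.mp hmmem).1
    have hmj : m < j := (Finset.mem_filter.mp hmmem).2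
    have hfe : (I.filter fun t => m < t) = I.filter fun t => j < t := by
      ext t
      simp only [Finset.mem_filter, and_congr_right_iff]
      intro ht
      constructor
      · intro hmt
        rcases lt_trichotomy t j with h | h | h
        · have hle : t ≤ m := Finset.le_max' (I.filter fun t => t < j) t
            (Finset.mem_filter.mpr ⟨ht, h⟩)
          exact absurd hle (not_le.mpr hmt)
        · exact absurd (h ▸ ht) hj
        · exact h
      · intro hjt; exact hmj.trans hjt
    by_cases h2 : (I.filter fun t => j < t).Nonempty
    · have h2' : (I.filter fun t => m < t).Nonempty := hfe ▸ h2
      have hcm : cI η I m = η ((I.filter fun t => j < t).min' h2) := by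
        simp only [cI, dif_pos hmI, dif_pos h2']
        rw [min'_congr hfe h2']
      rw [dif_pos h2, hcm]
    · have h2' : ¬ (I.filter fun t => m < t).Nonempty := by rw [hfe]; exact h2
      have hcm : cI η I m = η (I.min' hI) + 1 := by
        simp only [cI, dif_pos hmI, dif_neg h2']
      rw [dif_neg h2, hcm]
      constructor
      · intro h; exact h hI
      · intro h _; exact h
  · rw [dif_neg h1, hcj]
    have hall : ∀ t ∈ I, j < t := by
      intro t ht
      rcases lt_trichotomy t j with h | h | h
      · exact absurd ⟨t, Finset.mem_filter.mpr ⟨ht, h⟩⟩ h1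
      · exact absurd (h ▸ ht) hj
      · exact h
    have hfI : (I.filter fun t => j < t) = I := Finset.filter_true_of_mem hall
    have h2 : (I.filter fun t => j < t).Nonempty := by rw [hfI]; exact hI
    rw [dif_pos h2]
    have hMI : I.max' hI ∈ I := I.max'_mem hI
    have hMe : ¬ (I.filter fun t => I.max' hI < t).Nonempty := by
      rintro ⟨t, ht⟩
      rcases Finset.mem_filter.mp ht with ⟨htI, hlt⟩
      exact absurd (Finset.le_max' _ t htI) (not_le.mpr hlt)
    have hcM : cI η I (I.max' hI) = η (I.min' hI) + 1 := by
      simp only [cI, dif_pos hMI, dif_neg hMe]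
    rw [hcM, Nat.add_sub_cancel, min'_congr hfI h2]
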